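/- Let L_α(t) = max{n ≥ 0 : σ_α(n) ≤ t} be the inverse of a Sibuya(α) random walk. Then for every m ≥ 0, the generating function ∑_{t=0}^∞ u^t P(L_α(t) = m) equals (1-u)^{α-1} [1 - (1-u)^α]^m for u ∈ [0,1). -/

import Mathlib

open MeasureTheory ProbabilityTheory

/-- Generalized binomial coefficient `binom(x, k) = x(x-1)⋯(x-k+1)/k!` for real `x`. -/
noncomputable def gbinom (x : ℝ) (k : ℕ) : ℝ :=
  (∏ i ∈ Finset.range k, (x - i)) / (Nat.factorial k)

/-- Sibuya(α) probability mass function. -/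
noncomputable def sibuya (α : ℝ) (k : ℕ) : ℝ :=
  if k = 0 then 0 else (-1 : ℝ) ^ (k - 1) * gbinom α k

open Finset

lemma gbinom_zero (x : ℝ) : gbinom x 0 = 1 := by simp [gbinom]

lemma gbinom_succ (x : ℝ) (k : ℕ) :
    gbinom x (k + 1) = gbinom x k * ((x - k) / (k + 1)) := by
  have h1 : (Nat.factorial k : ℝ) ≠ 0 := Nat.cast_ne_zero.2 (Nat.factorial_ne_zero k)
  have h2 : ((k : ℝ) + 1) ≠ 0 := by positivity
  simp only [gbinom, Finset.prod_range_succ, Nat.factorial_succ]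
  push_cast
  rw [div_mul_div_comm, mul_comm ((k:ℝ)+1)]

lemma gbinom_rec (x : ℝ) (k : ℕ) :
    ((k : ℝ) + 1) * gbinom x (k + 1) = (x - k) * gbinom x k := by
  have h2 : ((k : ℝ) + 1) ≠ 0 := by positivity
  rw [gbinom_succ]
  field_simp

lemma abs_gbinom_le_one {α : ℝ} (hα : α ∈ Set.Ioo (0:ℝ) 1) (k : ℕ) :
    |gbinom α k| ≤ 1 := by
  induction k with
  | zero => simp [gbinom_zero]
  | succ k ih =>
    rw [gbinom_succ, abs_mul]
    have h1 : |(α - k) / (k + 1)| ≤ 1 := by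
      rw [abs_div, abs_of_pos (by positivity : (0:ℝ) < (k:ℝ) + 1), div_le_one (by positivity)]
      rw [abs_le]
      constructor
      · have := hα.1; nlinarith [Nat.cast_nonneg (α := ℝ) k]
      · have := hα.2; nlinarith [Nat.cast_nonneg (α := ℝ) k]
    calc |gbinom α k| * |(α - k)/(k+1)| ≤ 1 * 1 := by
          apply mul_le_mul ih h1 (abs_nonneg _) zero_le_one
      _ = 1 := by ring


section Series
variable {α : ℝ} (hα : α ∈ Set.Ioo (0:ℝ) 1)

lemma summable_gbinom (hα : α ∈ Set.Ioo (0:ℝ) 1) {y : ℝ} (hy : |y| < 1) :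
    Summable (fun k => gbinom α k * y ^ k) := by
  apply Summable.of_norm
  apply Summable.of_nonneg_of_le (fun k => norm_nonneg _) (fun k => ?_)
    (summable_geometric_of_lt_one (abs_nonneg y) hy)
  rw [norm_mul, norm_pow]
  calc ‖gbinom α k‖ * ‖y‖ ^ k ≤ 1 * |y| ^ k := by
        apply mul_le_mul_of_nonneg_right (abs_gbinom_le_one hα k) (by positivity)
    _ = |y| ^ k := one_mul _

lemma summable_deriv_gbinom (hα : α ∈ Set.Ioo (0:ℝ) 1) {r : ℝ} (hr0 : 1/2 ≤ r) (hr : r < 1) :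
    Summable (fun k : ℕ => 2 * ((k:ℝ) * r ^ k)) := by
  apply Summable.mul_left
  have := summable_pow_mul_geometric_of_norm_lt_one (R := ℝ) 1 (by
    rw [Real.norm_eq_abs, abs_of_nonneg (by linarith)]; exact hr)
  simpa using this

lemma deriv_bound (hα : α ∈ Set.Ioo (0:ℝ) 1) {r y : ℝ} (hr0 : 1/2 ≤ r) (hy : |y| ≤ r) (k : ℕ) :
    ‖gbinom α k * ((k:ℝ) * y ^ (k - 1))‖ ≤ 2 * ((k:ℝ) * r ^ k) := by
  have hrpos : (0:ℝ) < r := lt_of_lt_of_le (by norm_num) hr0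
  rw [norm_mul, norm_mul, Real.norm_eq_abs, Real.norm_eq_abs, Real.norm_eq_abs, abs_pow,
    Nat.abs_cast]
  cases k with
  | zero => simp
  | succ j =>
    push_cast
    have h1 : |y| ^ (j + 1 - 1) ≤ r ^ j := by
      simpa using pow_le_pow_left₀ (abs_nonneg y) hy j
    have h2 : r ^ j ≤ 2 * r ^ (j+1) := by
      have : r ^ j * 1 ≤ r ^ j * (2 * r) := by
        apply mul_le_mul_of_nonneg_left (by linarith) (by positivity)
      calc r ^ j = r ^ j * 1 := by ring
        _ ≤ r ^ j * (2 * r) := this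
        _ = 2 * r ^ (j+1) := by ring
    calc |gbinom α (j+1)| * (((j:ℝ)+1) * |y| ^ (j + 1 - 1))
        ≤ 1 * (((j:ℝ)+1) * r ^ j) := by
          apply mul_le_mul (abs_gbinom_le_one hα _) ?_ (by positivity) zero_le_one
          apply mul_le_mul_of_nonneg_left h1 (by positivity)
      _ ≤ 1 * (((j:ℝ)+1) * (2 * r ^ (j+1))) := by
          apply mul_le_mul_of_nonneg_left (mul_le_mul_of_nonneg_left h2 (by positivity))
            zero_le_one
      _ = 2 * (((j:ℝ)+1) * r ^ (j+1)) := by ring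

end Series

section Series2
variable {α : ℝ}

/-- Identity: (1+y) * (derivative series) = α * (series). -/
lemma ode_identity (hα : α ∈ Set.Ioo (0:ℝ) 1) {y : ℝ} (hy : |y| < 1)
    (hD : Summable fun k => gbinom α k * ((k:ℝ) * y ^ (k - 1))) :
    (1 + y) * ∑' k, gbinom α k * ((k:ℝ) * y ^ (k - 1))
      = α * ∑' k, gbinom α k * y ^ k := by
  set D := ∑' k, gbinom α k * ((k:ℝ) * y ^ (k - 1)) with hDdef
  have hd : HasSum (fun k => gbinom α k * ((k:ℝ) * y ^ (k - 1))) D := hD.hasSum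
  -- shifted series
  have hshift : HasSum (fun k => gbinom α (k+1) * (((k:ℝ)+1) * y ^ k)) D := by
    have h0 : HasSum (fun k => gbinom α k * ((k:ℝ) * y ^ (k - 1)))
        ((D - ∑ i ∈ range 1, gbinom α i * ((i:ℝ) * y ^ (i - 1)))
          + ∑ i ∈ range 1, gbinom α i * ((i:ℝ) * y ^ (i - 1))) := by
      simpa using hd
    have := (hasSum_nat_add_iff' (f := fun k => gbinom α k * ((k:ℝ) * y ^ (k - 1))) 1).2 h0
    simp only [range_one, Finset.sum_singleton, Nat.cast_zero, zero_mul, mul_zero,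
      add_sub_cancel_right, sub_zero, add_zero] at this
    convert this using 2 with k
    · rfl
    push_cast; ring_nf
  -- y * derivative series
  have hyd : HasSum (fun k => gbinom α k * ((k:ℝ) * y ^ k)) (y * D) := by
    have := hd.mul_left y
    convert this using 2 with k
    · rfl
    cases k with
    | zero => simp
    | succ j => push_cast; ring_nf
  have hsum2 : HasSum (fun k => α * (gbinom α k * y ^ k)) (D + y * D) := by
    have h := hshift.add hyd
    convert h using 2 with k
    have hrec := gbinom_rec α k
    have : α * gbinom α k = ((k:ℝ)+1) * gbinom α (k+1) + (k:ℝ) * gbinom α k := by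
      rw [hrec]; ring
    calc α * (gbinom α k * y ^ k) = (α * gbinom α k) * y ^ k := by ring
      _ = (((k:ℝ)+1) * gbinom α (k+1) + (k:ℝ) * gbinom α k) * y ^ k := by rw [this]
      _ = gbinom α (k+1) * (((k:ℝ)+1) * y ^ k) + gbinom α k * ((k:ℝ) * y ^ k) := by ring
  have hF : HasSum (fun k => gbinom α k * y ^ k) (∑' k, gbinom α k * y ^ k) :=
    (summable_gbinom hα hy).hasSum
  have h2 := (hF.mul_left α).unique hsum2
  rw [show (1 + y) * D = D + y * D by ring, ← h2]

end Series2

lemma hasSum_binomial {α : ℝ} (hα : α ∈ Set.Ioo (0:ℝ) 1) {x : ℝ} (hx : |x| < 1) :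
    HasSum (fun k => gbinom α k * x ^ k) ((1 + x) ^ α) := by
  set r : ℝ := max (1/2) ((1 + |x|)/2) with hrdef
  have hr0 : (1:ℝ)/2 ≤ r := le_max_left _ _
  have hrpos : (0:ℝ) < r := lt_of_lt_of_le (by norm_num) hr0
  have hxr : |x| < r := lt_of_lt_of_le (by linarith) (le_max_right _ _)
  have hr1 : r < 1 := by
    apply max_lt (by norm_num) (by linarith)
  set s : Set ℝ := Metric.ball (0:ℝ) r with hsdef
  have hmem : ∀ {z : ℝ}, z ∈ s → |z| < r := by
    intro z hz
    simpa [Real.norm_eq_abs] using Metric.mem_ball.1 hz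
  have hmem' : ∀ {z : ℝ}, |z| < r → z ∈ s := by
    intro z hz
    rw [hsdef, Metric.mem_ball, Real.dist_eq, sub_zero]
    exact hz
  set F : ℝ → ℝ := fun y => ∑' k, gbinom α k * y ^ k with hFdef
  set D : ℝ → ℝ := fun y => ∑' k, gbinom α k * ((k:ℝ) * y ^ (k - 1)) with hDdef
  have hterm : ∀ (k : ℕ) (z : ℝ), z ∈ s →
      HasDerivAt (fun y => gbinom α k * y ^ k) (gbinom α k * ((k:ℝ) * z ^ (k-1))) z :=
    fun k z _ => (hasDerivAt_pow k z).const_mul (gbinom α k)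
  have hbound : ∀ (k : ℕ) (z : ℝ), z ∈ s →
      ‖gbinom α k * ((k:ℝ) * z ^ (k-1))‖ ≤ 2 * ((k:ℝ) * r ^ k) :=
    fun k z hz => deriv_bound hα hr0 (le_of_lt (hmem hz)) k
  have h0s : (0:ℝ) ∈ s := by
    apply hmem'; simpa using hrpos
  have hsum0 : Summable fun k => gbinom α k * (0:ℝ) ^ k :=
    summable_gbinom hα (by simpa using one_pos)
  have hasD : ∀ y ∈ s, HasDerivAt F (D y) y := by
    intro y hy
    exact hasDerivAt_tsum_of_isPreconnected (summable_deriv_gbinom hα hr0 hr1)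
      Metric.isOpen_ball (convex_ball _ _).isPreconnected hterm hbound h0s hsum0 hy
  have hDsummable : ∀ y ∈ s, Summable fun k => gbinom α k * ((k:ℝ) * y ^ (k-1)) := by
    intro y hy
    exact Summable.of_norm_bounded (summable_deriv_gbinom hα hr0 hr1)
      (fun k => hbound k y hy)
  -- g := F * (1+·)^(-α) has zero derivative on s
  have hg : ∀ y ∈ s, HasDerivAt (fun z => F z * (1 + z) ^ (-α)) 0 y := by
    intro y hy
    have h1y : (0:ℝ) < 1 + y := by
      have := hmem hy
      have := abs_lt.1 this
      linarith [hr1]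
    have hrpow : HasDerivAt (fun z : ℝ => (1 + z) ^ (-α)) (-α * (1 + y) ^ (-α - 1) * 1) y := by
      have hid : HasDerivAt (fun z : ℝ => 1 + z) 1 y := by
        simpa using (hasDerivAt_id y).const_add (1:ℝ)
      have := hid.rpow_const (p := -α) (Or.inl h1y.ne')
      convert this using 1
      ring
    have hmulder := (hasD y hy).mul hrpow
    have hode := ode_identity hα (lt_trans (hmem hy) hr1) (hDsummable y hy)
    have key : D y * (1 + y) ^ (-α) + F y * (-α * (1 + y) ^ (-α - 1) * 1) = 0 := by
      have hsplit : (1 + y) ^ (-α) = (1 + y) ^ (-α - 1) * (1 + y) := by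
        rw [← Real.rpow_add_one h1y.ne']
        norm_num
      rw [hsplit]
      have : D y * ((1 + y) ^ (-α - 1) * (1 + y)) = ((1 + y) * D y) * (1 + y) ^ (-α - 1) := by
        ring
      rw [this, hode]
      ring
    rw [key] at hmulder
    exact hmulder
  -- g is constant on [min x 0, max x 0]
  have hsub : Set.Icc (min x 0) (max x 0) ⊆ s := by
    intro z hz
    apply hmem'
    rw [abs_lt]
    constructor
    · have : min x 0 ≤ z := hz.1
      have : -|x| ≤ min x 0 := by
        rcases le_total x 0 with h | h
        · simp [min_eq_left h, abs_of_nonpos h]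
        · simp [min_eq_right h]
      linarith
    · have : z ≤ max x 0 := hz.2
      have : max x 0 ≤ |x| := by
        rcases le_total x 0 with h | h
        · simp [max_eq_right h, abs_of_nonpos h]; linarith
        · simp [max_eq_left h, abs_of_nonneg h]
      linarith
  have hconst := constant_of_has_deriv_right_zero
    (f := fun z => F z * (1 + z) ^ (-α)) (a := min x 0) (b := max x 0)
    (fun z hz => ((hg z (hsub hz)).continuousAt).continuousWithinAt)
    (fun z hz => ((hg z (hsub (Set.mem_Icc.2 ⟨hz.1, le_of_lt hz.2⟩))).hasDerivWithinAt))
  have hxmem : x ∈ Set.Icc (min x 0) (max x 0) := Set.mem_Icc.2 ⟨min_le_left _ _, le_max_left _ _⟩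
  have h0mem : (0:ℝ) ∈ Set.Icc (min x 0) (max x 0) :=
    Set.mem_Icc.2 ⟨min_le_right _ _, le_max_right _ _⟩
  have heq : F x * (1 + x) ^ (-α) = F 0 * (1 + 0) ^ (-α) :=
    (hconst x hxmem).trans (hconst 0 h0mem).symm
  have hF0 : F 0 = 1 := by
    have hF0' : F 0 = ∑' k, gbinom α k * (0:ℝ) ^ k := rfl
    rw [hF0', tsum_eq_single 0]
    · simp [gbinom_zero]
    · intro k hk
      cases k with
      | zero => exact absurd rfl hk
      | succ j => simp
  have h1x : (0:ℝ) < 1 + x := by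
    have := abs_lt.1 hx; linarith
  have hFx : F x = (1 + x) ^ α := by
    have h2 : F x * (1 + x) ^ (-α) = 1 := by
      rw [heq, hF0]; simp
    have h3 : (1 + x) ^ (-α) = ((1 + x) ^ α)⁻¹ := by
      rw [Real.rpow_neg h1x.le]
    rw [h3] at h2
    have h4 : (0:ℝ) < (1 + x) ^ α := Real.rpow_pos_of_pos h1x α
    field_simp at h2
    linarith [h2]
  have := (summable_gbinom hα hx).hasSum
  rwa [show (∑' k, gbinom α k * x ^ k) = F x from rfl, hFx] at this

lemma hasSum_sibuya_gf {α : ℝ} (hα : α ∈ Set.Ioo (0:ℝ) 1) {u : ℝ}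
    (hu0 : 0 ≤ u) (hu1 : u < 1) :
    HasSum (fun k => u ^ k * sibuya α k) (1 - (1 - u) ^ α) := by
  have habs : |(-u)| < 1 := by rw [abs_neg, abs_of_nonneg hu0]; exact hu1
  have h := hasSum_binomial hα habs
  rw [show (1 + -u) = 1 - u by ring] at h
  have h1 : HasSum (fun k => gbinom α (k + 1) * (-u) ^ (k + 1))
      ((1 - u) ^ α - ∑ i ∈ range 1, gbinom α i * (-u) ^ i) :=
    (hasSum_nat_add_iff' (f := fun k => gbinom α k * (-u) ^ k) 1).2 h
  simp only [range_one, Finset.sum_singleton, pow_zero, mul_one, gbinom_zero] at h1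
  have h2 : HasSum (fun k => u ^ (k + 1) * sibuya α (k + 1)) (1 - (1 - u) ^ α) := by
    have hneg := h1.neg
    rw [neg_sub] at hneg
    have hfe : (fun k => -(gbinom α (k+1) * (-u) ^ (k+1)))
        = fun k => u ^ (k+1) * sibuya α (k+1) := by
      funext k
      simp only [sibuya, Nat.succ_ne_zero, if_false, Nat.add_sub_cancel]
      rw [neg_pow, pow_succ]
      ring
    rwa [hfe] at hneg
  refine (hasSum_nat_add_iff' (f := fun k => u ^ k * sibuya α k) 1).1 ?_
  convert h2 using 1
  · rfl
  simp [sibuya]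

/-- For the inverse `L_α(t) = max {n : σ_α(n) ≤ t}` of a Sibuya(α) random walk,
the generating function `∑_{t} u^t P(L_α(t) = m)` equals
`(1-u)^(α-1) [1 - (1-u)^α]^m` for `u ∈ [0,1)` and every `m ∈ ℕ`. -/
theorem sibuya_inverse_generating_function
    {Ω : Type*} [MeasurableSpace Ω] (μ : Measure Ω) [IsProbabilityMeasure μ]
    (α : ℝ) (hα : α ∈ Set.Ioo (0 : ℝ) 1)
    (Z : ℕ → Ω → ℕ) (hmeas : ∀ i, Measurable (Z i))
    (hindep : iIndepFun Z μ)
    (hlaw : ∀ i k, (μ {ω | Z i ω = k}).toReal = sibuya α k)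
    (S : ℕ → Ω → ℕ) (hS : ∀ n ω, S n ω = ∑ j ∈ Finset.range n, Z j ω)
    (L : ℕ → Ω → ℕ) (hL : ∀ t ω, L t ω = sSup {n : ℕ | S n ω ≤ t})
    (m : ℕ) (u : ℝ) (hu : u ∈ Set.Ico (0 : ℝ) 1) :
    ∑' t : ℕ, u ^ t * (μ {ω | L t ω = m}).toReal
      = (1 - u) ^ (α - 1) * (1 - (1 - u) ^ α) ^ m := by
  obtain ⟨hu0, hu1⟩ := hu
  have h1u : (0:ℝ) < 1 - u := by linarith
  -- basic measurability
  have hSfun : ∀ n, S n = ∑ j ∈ Finset.range n, Z j := by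
    intro n; funext ω; rw [hS]; simp [Finset.sum_apply]
  have hSmeas : ∀ n, Measurable (S n) := by
    intro n
    have h : S n = fun ω => ∑ j ∈ Finset.range n, Z j ω := funext (hS n)
    rw [h]
    exact Finset.measurable_sum _ (fun i _ => hmeas i)
  have hmsetZ : ∀ i (A : Set ℕ), MeasurableSet {ω | Z i ω ∈ A} :=
    fun i A => hmeas i ((Set.to_countable A).measurableSet)
  have hmsetS : ∀ n (A : Set ℕ), MeasurableSet {ω | S n ω ∈ A} :=
    fun n A => hSmeas n ((Set.to_countable A).measurableSet)
  -- nonnegativity / bounds helpers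
  have htoReal_le_one : ∀ A : Set Ω, (μ A).toReal ≤ 1 := by
    intro A
    have : μ A ≤ 1 := prob_le_one
    calc (μ A).toReal ≤ (1 : ENNReal).toReal := ENNReal.toReal_mono (by simp) this
      _ = 1 := by simp
  -- sibuya values are probabilities
  have hsib_nonneg : ∀ k, 0 ≤ sibuya α k := by
    intro k; rw [← hlaw 0 k]; exact ENNReal.toReal_nonneg
  have hsib_le_one : ∀ k, sibuya α k ≤ 1 := by
    intro k; rw [← hlaw 0 k]; exact htoReal_le_one _
  -- Z i is a.s. nonzero
  have hZ0 : ∀ i, μ {ω | Z i ω = 0} = 0 := by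
    intro i
    have h := hlaw i 0
    simp only [sibuya, if_pos rfl] at h
    rcases (ENNReal.toReal_eq_zero_iff _).1 h with h' | h'
    · exact h'
    · exact absurd h' (measure_ne_top μ _)
  -- tail probabilities
  have hq : ∀ i r, (μ {ω | r < Z i ω}).toReal = 1 - ∑ k ∈ range (r+1), sibuya α k := by
    intro i r
    have hC : {ω | Z i ω ≤ r} = ⋃ k ∈ range (r+1), {ω | Z i ω = k} := by
      ext ω
      simp only [Set.mem_setOf_eq, Set.mem_iUnion, Finset.mem_range]
      constructor
      · intro h; exact ⟨Z i ω, by omega, rfl⟩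
      · rintro ⟨k, hk, hzk⟩; omega
    have hdisj : Set.PairwiseDisjoint ↑(range (r+1)) (fun k => {ω | Z i ω = k}) := by
      intro k1 _ k2 _ hk
      apply Set.disjoint_left.2
      intro ω h1 h2
      exact hk (h1.symm.trans h2)
    have hμC : μ {ω | Z i ω ≤ r} = ∑ k ∈ range (r+1), μ {ω | Z i ω = k} := by
      rw [hC]
      exact measure_biUnion_finset hdisj (fun k _ => hmsetZ i {k})
    have hcompl : {ω | r < Z i ω} = {ω | Z i ω ≤ r}ᶜ := by
      ext ω; simp only [Set.mem_setOf_eq, Set.mem_compl_iff, not_le]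
    have hms : MeasurableSet {ω | Z i ω ≤ r} := hmsetZ i {k | k ≤ r}
    rw [hcompl, prob_compl_eq_one_sub hms, hμC,
      ENNReal.toReal_sub_of_le ?_ (by simp),
      ENNReal.toReal_sum (fun k _ => measure_ne_top μ _)]
    · simp only [ENNReal.toReal_one]
      congr 1
      exact Finset.sum_congr rfl (fun k _ => hlaw i k)
    · rw [← hμC]; exact prob_le_one
  -- independence of S n and Z n
  have hind : ∀ n, IndepFun (S n) (Z n) μ := by
    intro n
    have h := hindep.indepFun_sum_range_succ hmeas n
    rwa [← hSfun n] at h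
  have hjoint : ∀ n (A B : Set ℕ),
      μ ({ω | S n ω ∈ A} ∩ {ω | Z n ω ∈ B})
        = μ {ω | S n ω ∈ A} * μ {ω | Z n ω ∈ B} := by
    intro n A B
    exact (hind n).measure_inter_preimage_eq_mul A B
      ((Set.to_countable A).measurableSet) ((Set.to_countable B).measurableSet)
  have hjoint1 : ∀ n k l, μ ({ω | S n ω = k} ∩ {ω | Z n ω = l})
      = μ {ω | S n ω = k} * μ {ω | Z n ω = l} := by
    intro n k l
    exact hjoint n {x | x = k} {x | x = l}
  -- convolution identity for the law of S (n+1)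
  have hSsucc : ∀ n ω, S (n+1) ω = S n ω + Z n ω := by
    intro n ω; rw [hS, hS, Finset.sum_range_succ]
  have hconv : ∀ n s, (μ {ω | S (n+1) ω = s}).toReal
      = ∑ k ∈ range (s+1), (μ {ω | S n ω = k}).toReal * sibuya α (s - k) := by
    intro n s
    have hset : {ω | S (n+1) ω = s}
        = ⋃ k ∈ range (s+1), ({ω | S n ω = k} ∩ {ω | Z n ω = s - k}) := by
      ext ω
      simp only [Set.mem_setOf_eq, Set.mem_iUnion, Finset.mem_range, Set.mem_inter_iff,
        hSsucc n ω]
      constructor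
      · intro h; exact ⟨S n ω, by omega, rfl, by omega⟩
      · rintro ⟨k, hk, h1, h2⟩; omega
    have hdisj : Set.PairwiseDisjoint ↑(range (s+1))
        (fun k => {ω | S n ω = k} ∩ {ω | Z n ω = s - k}) := by
      intro k1 _ k2 _ hk
      apply Set.disjoint_left.2
      intro ω h1 h2
      exact hk ((h1.1.symm).trans h2.1)
    rw [hset, measure_biUnion_finset hdisj
      (fun k _ => ((hmsetS n {k}).inter (hmsetZ n {s - k}))),
      ENNReal.toReal_sum (fun k _ => measure_ne_top μ _)]
    apply Finset.sum_congr rfl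
    intro k _
    rw [hjoint1 n k (s - k), ENNReal.toReal_mul, hlaw n (s - k)]
  -- generating function of S n
  have hsummable_geom : Summable (fun k : ℕ => u ^ k) :=
    summable_geometric_of_lt_one hu0 hu1
  have hnormbd : ∀ (c : ℕ → ℝ), (∀ k, 0 ≤ c k) → (∀ k, c k ≤ 1) →
      Summable (fun k => ‖u ^ k * c k‖) := by
    intro c h0 h1
    apply Summable.of_nonneg_of_le (fun k => norm_nonneg _) (fun k => ?_) hsummable_geom
    rw [norm_mul, Real.norm_eq_abs, Real.norm_eq_abs, abs_of_nonneg (pow_nonneg hu0 k),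
      abs_of_nonneg (h0 k)]
    calc u ^ k * c k ≤ u ^ k * 1 := mul_le_mul_of_nonneg_left (h1 k) (pow_nonneg hu0 k)
      _ = u ^ k := mul_one _
  have hGF := hasSum_sibuya_gf hα hu0 hu1
  have hA : ∀ n, HasSum (fun s => u ^ s * (μ {ω | S n ω = s}).toReal)
      ((1 - (1 - u) ^ α) ^ n) := by
    intro n
    induction n with
    | zero =>
      have hS0 : ∀ ω, S 0 ω = 0 := by intro ω; rw [hS]; simp
      have hfe : (fun s => u ^ s * (μ {ω | S 0 ω = s}).toReal)
          = fun s => if s = 0 then 1 else 0 := by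
        funext s
        rcases Nat.eq_zero_or_pos s with h | h
        · subst h
          have : {ω | S 0 ω = 0} = Set.univ := by
            ext ω; simp [hS0 ω]
          simp [this]
        · have : {ω | S 0 ω = s} = ∅ := by
            ext ω; simp only [Set.mem_setOf_eq, Set.mem_empty_iff_false, iff_false]
            rw [hS0 ω]; omega
          rw [this]
          simp only [measure_empty, ENNReal.toReal_zero, mul_zero]
          rw [if_neg (by omega)]
      rw [hfe, pow_zero]
      exact hasSum_ite_eq 0 1
    | succ n ih =>
      have hf : Summable (fun k => ‖u ^ k * (μ {ω | S n ω = k}).toReal‖) :=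
        hnormbd _ (fun k => ENNReal.toReal_nonneg) (fun k => htoReal_le_one _)
      have hg : Summable (fun k => ‖u ^ k * sibuya α k‖) :=
        hnormbd _ hsib_nonneg hsib_le_one
      have hcauchy := hasSum_sum_range_mul_of_summable_norm hf hg
      rw [ih.tsum_eq, hGF.tsum_eq] at hcauchy
      have hfe : (fun s => ∑ k ∈ range (s+1),
            (u ^ k * (μ {ω | S n ω = k}).toReal) * (u ^ (s-k) * sibuya α (s-k)))
          = fun s => u ^ s * (μ {ω | S (n+1) ω = s}).toReal := by
        funext s
        rw [hconv n s, Finset.mul_sum]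
        apply Finset.sum_congr rfl
        intro k hk
        have hk' : k ≤ s := by
          have := Finset.mem_range.1 hk; omega
        rw [show u ^ s = u ^ k * u ^ (s - k) by
          rw [← pow_add, Nat.add_sub_cancel' hk']]
        ring
      rw [hfe] at hcauchy
      rw [pow_succ]
      exact hcauchy
  -- generating function of the tail probabilities
  have hgeo : HasSum (fun r : ℕ => u ^ r) (1 - u)⁻¹ := hasSum_geometric_of_lt_one hu0 hu1
  have hgeonorm : Summable (fun k : ℕ => ‖u ^ k‖) := by
    have hfe : (fun k : ℕ => ‖u ^ k‖) = fun k : ℕ => u ^ k := by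
      funext k; rw [Real.norm_eq_abs, abs_of_nonneg (pow_nonneg hu0 k)]
    rw [hfe]; exact hsummable_geom
  have hQ : HasSum (fun r => u ^ r * (1 - ∑ k ∈ range (r+1), sibuya α k))
      ((1 - u) ^ (α - 1)) := by
    have hgnorm : Summable (fun k => ‖u ^ k * sibuya α k‖) := hnormbd _ hsib_nonneg hsib_le_one
    have hcauchy := hasSum_sum_range_mul_of_summable_norm hgnorm hgeonorm
    rw [hGF.tsum_eq, hgeo.tsum_eq] at hcauchy
    have hfe : (fun r => ∑ k ∈ range (r+1), (u ^ k * sibuya α k) * u ^ (r - k))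
        = fun r => u ^ r * ∑ k ∈ range (r+1), sibuya α k := by
      funext r
      rw [Finset.mul_sum]
      apply Finset.sum_congr rfl
      intro k hk
      have hk' : k ≤ r := by have := Finset.mem_range.1 hk; omega
      rw [show u ^ r = u ^ k * u ^ (r - k) by rw [← pow_add, Nat.add_sub_cancel' hk']]
      ring
    rw [hfe] at hcauchy
    have hsub := hgeo.sub hcauchy
    have hfe2 : (fun r => u ^ r - u ^ r * ∑ k ∈ range (r+1), sibuya α k)
        = fun r => u ^ r * (1 - ∑ k ∈ range (r+1), sibuya α k) := by
      funext r; ring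
    rw [hfe2] at hsub
    have hval : (1 - u)⁻¹ - (1 - (1 - u) ^ α) * (1 - u)⁻¹ = (1 - u) ^ (α - 1) := by
      rw [Real.rpow_sub h1u, Real.rpow_one, div_eq_mul_inv]
      ring
    rwa [hval] at hsub
  -- the event {L t = m} up to null sets
  have hNnull : μ (⋃ i, {ω | Z i ω = 0}) = 0 := measure_iUnion_null hZ0
  have haeN : ∀ᵐ ω ∂μ, ω ∉ ⋃ i, {ω | Z i ω = 0} := measure_eq_zero_iff_ae_notMem.1 hNnull
  have hpt : ∀ t ω, ω ∉ (⋃ i, {ω' | Z i ω' = 0}) →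
      (L t ω = m ↔ (S m ω ≤ t ∧ t - S m ω < Z m ω)) := by
    intro t ω hω
    have hzpos : ∀ i, 1 ≤ Z i ω := by
      intro i
      by_contra h
      push_neg at h
      exact hω (Set.mem_iUnion.2 ⟨i, show Z i ω = 0 by omega⟩)
    have hmono : ∀ {n1 n2 : ℕ}, n1 ≤ n2 → S n1 ω ≤ S n2 ω := by
      intro n1 n2 h
      rw [hS, hS]
      exact Finset.sum_le_sum_of_subset (Finset.range_subset_range.2 h)
    have hge : ∀ n, n ≤ S n ω := by
      intro n
      induction n with
      | zero => omega
      | succ n ih =>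
        rw [hSsucc]
        have := hzpos n
        omega
    have hbdd : BddAbove {n | S n ω ≤ t} := ⟨t, fun n hn => le_trans (hge n) hn⟩
    have h0mem : 0 ∈ {n | S n ω ≤ t} := by
      simp only [Set.mem_setOf_eq, hS]
      simp
    rw [hL]
    constructor
    · intro hsup
      have hmem := Nat.sSup_mem ⟨0, h0mem⟩ hbdd
      rw [hsup] at hmem
      have hSm : S m ω ≤ t := hmem
      have hnot : ¬ (S (m+1) ω ≤ t) := by
        intro hc
        have hle := le_csSup hbdd (show m+1 ∈ {n | S n ω ≤ t} from hc)
        rw [hsup] at hle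
        omega
      rw [hSsucc] at hnot
      exact ⟨hSm, by omega⟩
    · rintro ⟨h1, h2⟩
      apply le_antisymm
      · apply csSup_le ⟨0, h0mem⟩
        intro n hn
        by_contra hc
        push_neg at hc
        have hc2 : S (m+1) ω ≤ t := le_trans (hmono (by omega)) hn
        rw [hSsucc] at hc2
        omega
      · exact le_csSup hbdd h1
  have hevent : ∀ t, (μ {ω | L t ω = m}).toReal
      = ∑ s ∈ range (t+1), (μ {ω | S m ω = s}).toReal
          * (1 - ∑ k ∈ range (t - s + 1), sibuya α k) := by
    intro t
    have haeq : {ω | L t ω = m}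
        =ᵐ[μ] ⋃ s ∈ range (t+1), ({ω | S m ω = s} ∩ {ω | t - s < Z m ω}) := by
      rw [Filter.eventuallyEq_set]
      filter_upwards [haeN] with ω hω
      rw [hpt t ω hω]
      simp only [Set.mem_iUnion, Finset.mem_range, Set.mem_inter_iff, Set.mem_setOf_eq]
      constructor
      · rintro ⟨h1, h2⟩
        exact ⟨S m ω, by omega, rfl, h2⟩
      · rintro ⟨s, hs, h1, h2⟩
        omega
    have hdisj : Set.PairwiseDisjoint ↑(range (t+1))
        (fun s => {ω | S m ω = s} ∩ {ω | t - s < Z m ω}) := by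
      intro k1 _ k2 _ hk
      apply Set.disjoint_left.2
      intro ω h1 h2
      exact hk ((h1.1.symm).trans h2.1)
    rw [measure_congr haeq, measure_biUnion_finset hdisj
      (fun s _ => (hmsetS m {x | x = s}).inter (hmsetZ m {x | t - s < x})),
      ENNReal.toReal_sum (fun s _ => measure_ne_top μ _)]
    apply Finset.sum_congr rfl
    intro s _
    have hj : μ ({ω | S m ω = s} ∩ {ω | t - s < Z m ω})
        = μ {ω | S m ω = s} * μ {ω | t - s < Z m ω} :=
      hjoint m {x | x = s} {x | t - s < x}
    rw [hj, ENNReal.toReal_mul, hq m (t - s)]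
  -- conclusion via Cauchy product
  have hf : Summable (fun k => ‖u ^ k * (μ {ω | S m ω = k}).toReal‖) :=
    hnormbd _ (fun k => ENNReal.toReal_nonneg) (fun k => htoReal_le_one _)
  have hgq : Summable (fun r => ‖u ^ r * (1 - ∑ k ∈ range (r+1), sibuya α k)‖) := by
    apply hnormbd
    · intro r; rw [← hq 0 r]; exact ENNReal.toReal_nonneg
    · intro r; rw [← hq 0 r]; exact htoReal_le_one _
  have hcauchy := hasSum_sum_range_mul_of_summable_norm hf hgq
  rw [(hA m).tsum_eq, hQ.tsum_eq] at hcauchy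
  have hfe : (fun t => ∑ s ∈ range (t+1),
        (u ^ s * (μ {ω | S m ω = s}).toReal)
          * (u ^ (t-s) * (1 - ∑ k ∈ range (t - s + 1), sibuya α k)))
      = fun t => u ^ t * (μ {ω | L t ω = m}).toReal := by
    funext t
    rw [hevent t, Finset.mul_sum]
    apply Finset.sum_congr rfl
    intro s hs
    have hs' : s ≤ t := by have := Finset.mem_range.1 hs; omega
    rw [show u ^ t = u ^ s * u ^ (t - s) by rw [← pow_add, Nat.add_sub_cancel' hs']]
    ring
  rw [hfe] at hcauchy
  rw [hcauchy.tsum_eq, mul_comm]
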